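/- Let 0 ≤ t1 < t2 < +∞ and z ∈ ℂ⁺. (a) If Re z ≤ 0, then ω(z,[t1,t2]) ≤ (t2−t1)·(1/π)·Im z/|z|². (b) If Re z / |z| < 2·√(t1·t2)/(t1+t2) and |z| ≠ √(t1·t2), then ω(z,[t1,t2]) ≤ (t2−t1)·Im z / (π·(|z| − √(t1·t2))²). (c) If a ∈ (0,1) and Re z / |z| ≤ 2·a·√(t1·t2)/(t1+t2), then ω(z,[t1,t2]) ≤ (t2−t1)/(π·(1−a²)) · Im z/|z|². -/

import Mathlib

open MeasureTheory

/-- Harmonic measure of the segment `[t1, t2]` at the point `z` for the open upper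
half-plane, given by the Poisson integral of the indicator of `[t1, t2]`. -/
noncomputable def omegaUHP (z : ℂ) (t1 t2 : ℝ) : ℝ :=
  ∫ t in t1..t2, (1 / Real.pi) * (z.im / ((t - z.re) ^ 2 + z.im ^ 2))

lemma arctan_le_self' {w : ℝ} (hw : 0 ≤ w) : Real.arctan w ≤ w := by
  have h0 : 0 ≤ Real.arctan w := by
    rw [← Real.arctan_zero]
    exact Real.arctan_strictMono.monotone hw
  have h := Real.le_tan h0 (Real.arctan_lt_pi_div_two w)
  rwa [Real.tan_arctan] at h

lemma poisson_cont (x y A : ℝ) (hy : 0 < y) :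
    Continuous fun t : ℝ => (1 / Real.pi) * (A / ((t - x) ^ 2 + y ^ 2)) := by
  apply continuous_const.mul
  exact continuous_const.div (by fun_prop) (fun t => by positivity)

/-- Constant bound on the Poisson integral from a lower bound on the denominator. -/
lemma denom_int_le (x y t1 t2 D : ℝ) (hy : 0 < y) (h12 : t1 ≤ t2) (hD : 0 < D)
    (h : ∀ t ∈ Set.Icc t1 t2, D ≤ (t - x) ^ 2 + y ^ 2) :
    (∫ t in t1..t2, (1 / Real.pi) * (y / ((t - x) ^ 2 + y ^ 2)))
      ≤ (t2 - t1) * ((1 / Real.pi) * (y / D)) := by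
  have hπ := Real.pi_pos
  calc (∫ t in t1..t2, (1 / Real.pi) * (y / ((t - x) ^ 2 + y ^ 2)))
      ≤ ∫ _t in t1..t2, (1 / Real.pi) * (y / D) := by
        apply intervalIntegral.integral_mono_on h12
          ((poisson_cont x y y hy).intervalIntegrable _ _) intervalIntegrable_const
        intro t ht
        gcongr
        exact h t ht
    _ = (t2 - t1) * ((1 / Real.pi) * (y / D)) := by
        rw [intervalIntegral.integral_const, smul_eq_mul]

/-- Bound for the integral of `1/((t-b)^2+c^2)` via the arctan antiderivative. -/
lemma integral_inv_sq_add_sq_le (b c t1 t2 : ℝ) (hc : 0 < c) (h12 : t1 ≤ t2)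
    (hD : 0 < c ^ 2 + (t1 - b) * (t2 - b)) :
    (∫ t in t1..t2, 1 / ((t - b) ^ 2 + c ^ 2))
      ≤ (t2 - t1) / (c ^ 2 + (t1 - b) * (t2 - b)) := by
  set D := c ^ 2 + (t1 - b) * (t2 - b) with hDdef
  have hF : ∀ t : ℝ, HasDerivAt (fun s => Real.arctan ((s - b) / c) / c)
      (1 / ((t - b) ^ 2 + c ^ 2)) t := by
    intro t
    have h1 : HasDerivAt (fun s : ℝ => (s - b) / c) (1 / c) t := by
      simpa using ((hasDerivAt_id t).sub_const b).div_const c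
    have h2 := (Real.hasDerivAt_arctan ((t - b) / c)).comp t h1
    have h3 := h2.div_const c
    refine HasDerivAt.congr_deriv h3 ?_
    have hc0 : (c : ℝ) ≠ 0 := hc.ne'
    field_simp
    ring
  have hcont : Continuous fun t : ℝ => 1 / ((t - b) ^ 2 + c ^ 2) :=
    continuous_const.div (by fun_prop) (fun t => by positivity)
  rw [intervalIntegral.integral_eq_sub_of_hasDerivAt (fun t _ => hF t)
    (hcont.intervalIntegrable _ _)]
  set u1 := (t1 - b) / c with hu1
  set u2 := (t2 - b) / c with hu2
  have hc0 : (c : ℝ) ≠ 0 := hc.ne'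
  have hmul : u2 * (-u1) < 1 := by
    have h1 : u2 * (-u1) = -((t1 - b) * (t2 - b)) / c ^ 2 := by
      rw [hu1, hu2]; field_simp
    rw [h1, div_lt_one (by positivity)]
    nlinarith [hD]
  have harc := Real.arctan_add hmul
  rw [Real.arctan_neg] at harc
  have hw : (u2 + -u1) / (1 - u2 * -u1) = c * (t2 - t1) / D := by
    rw [hu1, hu2, hDdef]
    rw [div_eq_div_iff]
    · field_simp; ring
    · have h1 : 1 - (t2 - b) / c * -((t1 - b) / c) = (c ^ 2 + (t1 - b) * (t2 - b)) / c ^ 2 := by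
        field_simp; ring
      rw [h1]
      positivity
    · exact hD.ne'
  have hwnn : 0 ≤ c * (t2 - t1) / D := by
    apply div_nonneg _ hD.le
    exact mul_nonneg hc.le (by linarith)
  have key : Real.arctan u2 - Real.arctan u1 ≤ c * (t2 - t1) / D := by
    have h2 : Real.arctan u2 - Real.arctan u1 = Real.arctan (c * (t2 - t1) / D) := by
      rw [← hw, ← harc]; ring
    rw [h2]
    exact arctan_le_self' hwnn
  have hgoal : Real.arctan u2 / c - Real.arctan u1 / c ≤ (c * (t2 - t1) / D) / c := by
    rw [div_sub_div_same]
    exact div_le_div_of_nonneg_right key hc.le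
  calc Real.arctan u2 / c - Real.arctan u1 / c ≤ (c * (t2 - t1) / D) / c := hgoal
    _ = (t2 - t1) / D := by field_simp

set_option maxHeartbeats 1600000 in
theorem stmt_11 (z : ℂ) (hz : 0 < z.im) (t1 t2 : ℝ) (h1 : 0 ≤ t1) (ht : t1 < t2) :
    (z.re ≤ 0 →
      omegaUHP z t1 t2 ≤ (t2 - t1) * ((1 / Real.pi) * (z.im / ‖z‖ ^ 2))) ∧
    (z.re / ‖z‖ < 2 * Real.sqrt (t1 * t2) / (t1 + t2) →
      ‖z‖ ≠ Real.sqrt (t1 * t2) →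
      omegaUHP z t1 t2 ≤
        (t2 - t1) * z.im /
          (Real.pi * (‖z‖ - Real.sqrt (t1 * t2)) ^ 2)) ∧
    (∀ a ∈ Set.Ioo (0 : ℝ) 1,
      z.re / ‖z‖ ≤ 2 * a * Real.sqrt (t1 * t2) / (t1 + t2) →
      omegaUHP z t1 t2 ≤
        (t2 - t1) / (Real.pi * (1 - a ^ 2)) * (z.im / ‖z‖ ^ 2)) := by
  have hπ := Real.pi_pos
  have hz0 : z ≠ 0 := by
    intro h; rw [h] at hz; simp at hz
  set x := z.re with hxdef
  set y := z.im with hydef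
  set r := ‖z‖ with hrdef
  have hr : 0 < r := norm_pos_iff.mpr hz0
  have hr2 : r ^ 2 = x ^ 2 + y ^ 2 := by
    rw [hrdef, Complex.sq_norm, Complex.normSq_apply, hxdef, hydef]; ring
  set g := Real.sqrt (t1 * t2) with hgdef
  set S := t1 + t2 with hSdef
  have ht2 : 0 < t2 := lt_of_le_of_lt h1 ht
  have hS : 0 < S := by rw [hSdef]; linarith
  have hg0 : 0 ≤ g := Real.sqrt_nonneg _
  have hg2 : g ^ 2 = t1 * t2 := Real.sq_sqrt (mul_nonneg h1 ht2.le)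
  have hsq1 : Real.sqrt t1 ^ 2 = t1 := Real.sq_sqrt h1
  have hsq2 : Real.sqrt t2 ^ 2 = t2 := Real.sq_sqrt ht2.le
  have hgprod : g = Real.sqrt t1 * Real.sqrt t2 := by
    rw [hgdef, Real.sqrt_mul h1]
  have hsqlt : Real.sqrt t1 < Real.sqrt t2 := Real.sqrt_lt_sqrt h1 ht
  have h2g : 2 * g < S := by
    rw [hgprod, hSdef]
    nlinarith [sq_nonneg (Real.sqrt t2 - Real.sqrt t1)]
  clear_value x y r g S
  refine ⟨?_, ?_, ?_⟩
  · -- part (a)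
    intro hx0
    rw [omegaUHP, ← hxdef, ← hydef]
    apply denom_int_le x y t1 t2 (r ^ 2) hz ht.le (pow_pos hr 2)
    intro t htI
    have ht0 : 0 ≤ t := le_trans h1 htI.1
    nlinarith [hr2, mul_nonneg ht0 (neg_nonneg.mpr hx0), sq_nonneg t]
  · -- part (b)
    intro hxb hrg
    set b := 2 * r * g / S with hbdef
    have hb0 : 0 ≤ b := by
      rw [hbdef]
      exact div_nonneg (by nlinarith) hS.le
    have hbr : b < r := by
      rw [hbdef]
      rw [div_lt_iff₀ hS]
      nlinarith [mul_lt_mul_of_pos_left h2g hr]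
    have hc2pos : 0 < r ^ 2 - b ^ 2 := by nlinarith
    set c := Real.sqrt (r ^ 2 - b ^ 2) with hcdef
    have hc : 0 < c := Real.sqrt_pos.mpr hc2pos
    have hc2 : c ^ 2 = r ^ 2 - b ^ 2 := Real.sq_sqrt hc2pos.le
    have hx : x < b := by
      rw [div_lt_iff₀ hr] at hxb
      rw [hbdef]
      calc x < 2 * g / S * r := hxb
        _ = 2 * r * g / S := by ring
    have hSb : S * b = 2 * r * g := by
      rw [hbdef]; field_simp
    have hDeq : c ^ 2 + (t1 - b) * (t2 - b) = (r - g) ^ 2 := by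
      have : (t1 - b) * (t2 - b) = t1 * t2 - S * b + b ^ 2 := by rw [hSdef]; ring
      rw [hc2, this, hSb, ← hg2]; ring
    have hDpos : 0 < (r - g) ^ 2 := sq_pos_of_ne_zero (sub_ne_zero.mpr hrg)
    clear_value b c
    have step1 : omegaUHP z t1 t2
        ≤ ∫ t in t1..t2, (1 / Real.pi) * (y / ((t - b) ^ 2 + c ^ 2)) := by
      rw [omegaUHP, ← hxdef, ← hydef]
      apply intervalIntegral.integral_mono_on ht.le
        ((poisson_cont x y y hz).intervalIntegrable _ _)
        ((poisson_cont b c y hc).intervalIntegrable _ _)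
      intro t htI
      have ht0 : 0 ≤ t := le_trans h1 htI.1
      have hq2 : (0:ℝ) < (t - b) ^ 2 + c ^ 2 :=
        add_pos_of_nonneg_of_pos (sq_nonneg _) (pow_pos hc 2)
      have hle : (t - b) ^ 2 + c ^ 2 ≤ (t - x) ^ 2 + y ^ 2 := by
        nlinarith [hc2, hr2, mul_le_mul_of_nonneg_left hx.le ht0]
      exact mul_le_mul_of_nonneg_left
        (div_le_div_of_nonneg_left hz.le hq2 hle) (by positivity)
    have step2 : (∫ t in t1..t2, (1 / Real.pi) * (y / ((t - b) ^ 2 + c ^ 2)))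
        = (1 / Real.pi * y) * ∫ t in t1..t2, 1 / ((t - b) ^ 2 + c ^ 2) := by
      rw [← intervalIntegral.integral_const_mul]
      apply intervalIntegral.integral_congr
      intro t _
      ring
    have hDpos' : 0 < c ^ 2 + (t1 - b) * (t2 - b) := by rw [hDeq]; exact hDpos
    have step3 := integral_inv_sq_add_sq_le b c t1 t2 hc ht.le hDpos'
    rw [hDeq] at step3
    have step4 : omegaUHP z t1 t2 ≤ (1 / Real.pi * y) * ((t2 - t1) / (r - g) ^ 2) := by
      calc omegaUHP z t1 t2 ≤ _ := step1
        _ = (1 / Real.pi * y) * ∫ t in t1..t2, 1 / ((t - b) ^ 2 + c ^ 2) := step2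
        _ ≤ (1 / Real.pi * y) * ((t2 - t1) / (r - g) ^ 2) := by
            apply mul_le_mul_of_nonneg_left step3
            positivity
    calc omegaUHP z t1 t2 ≤ (1 / Real.pi * y) * ((t2 - t1) / (r - g) ^ 2) := step4
      _ = (t2 - t1) * y / (Real.pi * (r - g) ^ 2) := by
          rw [eq_div_iff (mul_pos hπ hDpos).ne']
          field_simp
  · -- part (c)
    intro a ha hxa
    obtain ⟨ha0, ha1⟩ := ha
    set K := 2 * a * g / S with hKdef
    have hK0 : 0 ≤ K := by
      rw [hKdef]
      exact div_nonneg (by nlinarith) hS.le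
    have hKa : K ≤ a := by
      rw [hKdef, div_le_iff₀ hS]
      nlinarith [mul_lt_mul_of_pos_left h2g ha0]
    have hK2 : K ^ 2 ≤ a ^ 2 := pow_le_pow_left₀ hK0 hKa 2
    have hx : x ≤ K * r := by
      rw [div_le_iff₀ hr] at hxa
      rw [hKdef]
      exact hxa
    clear_value K
    have ha2 : 0 < 1 - a ^ 2 := by nlinarith
    have hbound : omegaUHP z t1 t2
        ≤ (t2 - t1) * ((1 / Real.pi) * (y / (r ^ 2 * (1 - a ^ 2)))) := by
      rw [omegaUHP, ← hxdef, ← hydef]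
      apply denom_int_le x y t1 t2 (r ^ 2 * (1 - a ^ 2)) hz ht.le
        (mul_pos (pow_pos hr 2) ha2)
      intro t htI
      have ht0 : 0 ≤ t := le_trans h1 htI.1
      have h2tx : t * x ≤ t * (K * r) := mul_le_mul_of_nonneg_left hx ht0
      nlinarith [hr2, sq_nonneg (t - K * r), mul_le_mul_of_nonneg_left hK2 (sq_nonneg r)]
    calc omegaUHP z t1 t2 ≤ (t2 - t1) * ((1 / Real.pi) * (y / (r ^ 2 * (1 - a ^ 2)))) := hbound
      _ = (t2 - t1) / (Real.pi * (1 - a ^ 2)) * (y / r ^ 2) := by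
          rw [div_mul_div_comm, div_mul_div_comm, mul_div_assoc']
          rw [div_eq_div_iff (by positivity) (by positivity)]
          ring
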